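/- Let L/K be a finite field extension with automorphism group G. A subalgebra A of L⋊G containing L is stable under conjugation by all elements of G (i.e. gAg^{-1} = A for all g ∈ G) if and only if A = L⋊N for a normal subgroup N of G. -/

import Mathlib

namespace Stmt11Aux

variable {K L : Type} [Field K] [Field L] [Algebra K L]

/-- The image of an automorphism in `Module.End K L`. -/
def ι (g : L ≃ₐ[K] L) : Module.End K L := g.toLinearMap

/-- Left multiplication as an endomorphism. -/
def lm (x : L) : Module.End K L := Algebra.lmul K L x

@[simp] lemma ι_apply (g : L ≃ₐ[K] L) (x : L) : ι g x = g x := rfl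

@[simp] lemma lm_apply (x y : L) : lm (K := K) x y = x * y := rfl

lemma ι_one : ι (1 : L ≃ₐ[K] L) = 1 := LinearMap.ext fun _ => rfl

lemma ι_mul (g h : L ≃ₐ[K] L) : ι (g * h) = ι g * ι h := LinearMap.ext fun _ => rfl

/-- `ι` as a monoid hom. -/
def ιM : (L ≃ₐ[K] L) →* Module.End K L where
  toFun := ι
  map_one' := ι_one
  map_mul' := ι_mul

@[simp] lemma smul_apply' (c : L) (f : Module.End K L) (x : L) : (c • f) x = c * f x := rfl

lemma smul_mul (c : L) (f f' : Module.End K L) : (c • f) * f' = c • (f * f') :=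
  LinearMap.ext fun _ => rfl

lemma ι_mul_smul (g : L ≃ₐ[K] L) (c : L) (f : Module.End K L) :
    ι g * (c • f) = g c • (ι g * f) :=
  LinearMap.ext fun x => by
    simp [ι, Module.End.mul_apply, map_mul]

lemma lm_mul_smul (d c : L) (f : Module.End K L) :
    lm (K := K) d * (c • f) = (d * c) • f :=
  LinearMap.ext fun x => by simp [Module.End.mul_apply, mul_assoc]

lemma smul_mul_lm (c : L) (g : L ≃ₐ[K] L) (x : L) :
    (c • ι g) * lm (K := K) x = (c * g x) • ι g :=
  LinearMap.ext fun y => by simp [Module.End.mul_apply, map_mul, mul_assoc]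

lemma lm_smul (c : L) (f : Module.End K L) : lm (K := K) c * f = c • f :=
  LinearMap.ext fun _ => rfl

lemma extract (A : Subalgebra K (Module.End K L))
    (hL : ∀ x : L, lm (K := K) x ∈ A) (s : Finset (L ≃ₐ[K] L)) :
    ∀ c : (L ≃ₐ[K] L) → L, (∑ g ∈ s, c g • ι g) ∈ A →
      ∀ g₀ ∈ s, c g₀ ≠ 0 → ι g₀ ∈ A := by
  classical
  induction s using Finset.strongInduction with
  | _ s ih =>
    intro c ha g₀ hg₀ hc₀
    by_cases hs : ∀ g₁ ∈ s, g₁ = g₀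
    · have hsum : ∑ g ∈ s, c g • ι g = c g₀ • ι g₀ :=
        Finset.sum_eq_single g₀ (fun b hb hbne => absurd (hs b hb) hbne)
          (fun h => absurd hg₀ h)
      have h1 : lm (K := K) (c g₀)⁻¹ * (c g₀ • ι g₀) = ι g₀ := by
        rw [lm_mul_smul, inv_mul_cancel₀ hc₀, one_smul]
      have := A.mul_mem (hL (c g₀)⁻¹) (hsum ▸ ha)
      rwa [h1] at this
    · push_neg at hs
      obtain ⟨g₁, hg₁s, hg₁⟩ := hs
      have hx : ∃ x, g₀ x ≠ g₁ x := by
        by_contra h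
        push_neg at h
        exact hg₁ (AlgEquiv.ext fun x => (h x).symm)
      obtain ⟨x, hx⟩ := hx
      have hb : (∑ g ∈ s, c g • ι g) * lm (K := K) x
          - lm (K := K) (g₁ x) * ∑ g ∈ s, c g • ι g
          = ∑ g ∈ s, (c g * (g x - g₁ x)) • ι g := by
        rw [Finset.sum_mul, Finset.mul_sum, ← Finset.sum_sub_distrib]
        refine Finset.sum_congr rfl fun g _ => ?_
        rw [smul_mul_lm, lm_mul_smul]
        erw [← sub_smul]
        congr 1
        ring
      have hb' : (∑ g ∈ s, (c g * (g x - g₁ x)) • ι g) ∈ A := by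
        rw [← hb]
        exact A.sub_mem (A.mul_mem ha (hL x)) (A.mul_mem (hL _) ha)
      have herase : ∑ g ∈ s.erase g₁, (c g * (g x - g₁ x)) • ι g
          = ∑ g ∈ s, (c g * (g x - g₁ x)) • ι g :=
        Finset.sum_erase _ (by simp)
      exact ih (s.erase g₁) (Finset.erase_ssubset hg₁s) _ (herase ▸ hb')
        g₀ (Finset.mem_erase.mpr ⟨fun h => hg₁ h.symm, hg₀⟩)
        (mul_ne_zero hc₀ (sub_ne_zero.mpr hx))

/-- products of elements of the span of `ι`-type sets stay in the span. -/
lemma mul_mem_span_range :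
    ∀ a ∈ Submodule.span L (Set.range (ι (K := K) (L := L))),
    ∀ b ∈ Submodule.span L (Set.range (ι (K := K) (L := L))),
      a * b ∈ Submodule.span L (Set.range (ι (K := K) (L := L))) := by
  have key : ∀ g : L ≃ₐ[K] L, ∀ b ∈ Submodule.span L (Set.range (ι (K := K) (L := L))),
      ι g * b ∈ Submodule.span L (Set.range (ι (K := K) (L := L))) := by
    intro g b hb
    induction hb using Submodule.span_induction with
    | mem x hx =>
      obtain ⟨h, rfl⟩ := hx
      exact Submodule.subset_span ⟨g * h, (ι_mul g h).symm⟩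
    | zero => simpa using Submodule.zero_mem _
    | add x y _ _ hx hy => rw [mul_add]; exact Submodule.add_mem _ hx hy
    | smul c x _ hx => rw [ι_mul_smul]; exact Submodule.smul_mem _ _ hx
  intro a ha b hb
  induction ha using Submodule.span_induction with
  | mem x hx => obtain ⟨g, rfl⟩ := hx; exact key g b hb
  | zero => simpa using Submodule.zero_mem _
  | add x y _ _ hx hy => rw [add_mul]; exact Submodule.add_mem _ hx hy
  | smul c x _ hx => rw [smul_mul]; exact Submodule.smul_mem _ _ hx

lemma lm_mem_span (x : L) :
    lm (K := K) x ∈ Submodule.span L (Set.range (ι (K := K) (L := L))) := by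
  have : lm (K := K) x = x • ι (1 : L ≃ₐ[K] L) := LinearMap.ext fun y => by simp
  rw [this]
  exact Submodule.smul_mem _ _ (Submodule.subset_span ⟨1, rfl⟩)

lemma one_mem_span :
    (1 : Module.End K L) ∈ Submodule.span L (Set.range (ι (K := K) (L := L))) := by
  rw [← ι_one]; exact Submodule.subset_span ⟨1, rfl⟩

lemma algebraMap_mem_span (r : K) :
    algebraMap K (Module.End K L) r ∈ Submodule.span L (Set.range (ι (K := K) (L := L))) := by
  have : algebraMap K (Module.End K L) r = lm (K := K) (algebraMap K L r) :=
    LinearMap.ext fun y => by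
      simp [Module.algebraMap_end_apply, Algebra.smul_def]
  rw [this]
  exact lm_mem_span _

/-- The span of all automorphisms as a `K`-subalgebra. -/
def spanSubalg (K L : Type) [Field K] [Field L] [Algebra K L] :
    Subalgebra K (Module.End K L) where
  carrier := Submodule.span L (Set.range (ι (K := K) (L := L)))
  add_mem' := Submodule.add_mem _
  mul_mem' h1 h2 := mul_mem_span_range _ h1 _ h2
  one_mem' := one_mem_span
  algebraMap_mem' := algebraMap_mem_span

lemma adjoin_le_span :
    (Algebra.adjoin K (Set.range (Algebra.lmul K L) ∪
        Set.range fun g : L ≃ₐ[K] L => (g.toLinearMap : Module.End K L)) : Set (Module.End K L))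
      ⊆ (Submodule.span L (Set.range (ι (K := K) (L := L))) : Set (Module.End K L)) := by
  have h : Algebra.adjoin K (Set.range (Algebra.lmul K L) ∪
      Set.range fun g : L ≃ₐ[K] L => (g.toLinearMap : Module.End K L)) ≤ spanSubalg K L := by
    apply Algebra.adjoin_le
    rintro f (⟨x, rfl⟩ | ⟨g, rfl⟩)
    · exact lm_mem_span x
    · exact Submodule.subset_span ⟨g, rfl⟩
  exact h

end Stmt11Aux

open Stmt11Aux in
/-- For a finite field extension `L/K` with `G = Aut_K(L)`, a subalgebra `A` of `L⋊G`
containing `L` is stable under conjugation by every element of `G` (each `g ∈ G` being a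
unit of `L⋊G`, with inverse `g⁻¹`) if and only if `A = L⋊N` for a normal subgroup `N` of
`G`. -/
theorem stmt11 (K L : Type) [Field K] [Field L] [Algebra K L] [FiniteDimensional K L] :
    letI LG : Subalgebra K (Module.End K L) := Algebra.adjoin K (Set.range (Algebra.lmul K L) ∪
      Set.range fun g : L ≃ₐ[K] L => (g.toLinearMap : Module.End K L))
    ∀ A : Subalgebra K (Module.End K L), (Algebra.lmul K L).range ≤ A → A ≤ LG →
      ((∀ g : L ≃ₐ[K] L, ∀ a ∈ A,
          (g.toLinearMap : Module.End K L) * a * (g.symm.toLinearMap : Module.End K L) ∈ A) ↔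
        ∃ N : Subgroup (L ≃ₐ[K] L), N.Normal ∧
          (A : Set (Module.End K L)) =
            (Submodule.span L ((fun g : L ≃ₐ[K] L => (g.toLinearMap : Module.End K L)) ''
                (N : Set (L ≃ₐ[K] L))) :
              Submodule L (Module.End K L))) := by
  classical
  intro A hA1 hA2
  have hL : ∀ x : L, lm (K := K) x ∈ A := fun x => hA1 ⟨x, rfl⟩
  have hιimg : ∀ N : Subgroup (L ≃ₐ[K] L),
      ((fun g : L ≃ₐ[K] L => (g.toLinearMap : Module.End K L)) '' (N : Set (L ≃ₐ[K] L)))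
        = ι (K := K) '' (N : Set (L ≃ₐ[K] L)) := fun N => rfl
  constructor
  · intro hconj
    -- the subgroup of automorphisms lying in A
    have hmono : ∀ g : L ≃ₐ[K] L, ι g ∈ A → ∀ n : ℕ, ι (g ^ n) ∈ A := by
      intro g hg n
      have hp : ι (g ^ n) = ι g ^ n := map_pow (ιM (K := K) (L := L)) g n
      rw [hp]
      exact A.pow_mem hg n
    let N : Subgroup (L ≃ₐ[K] L) :=
      { carrier := {g | ι g ∈ A}
        one_mem' := by simpa [ι_one] using A.one_mem
        mul_mem' := fun {g h} hg hh => by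
          simpa [ι_mul] using A.mul_mem hg hh
        inv_mem' := fun {g} hg => by
          have hord : orderOf g ≠ 0 := (orderOf_pos g).ne'
          have h1 : g * g ^ (orderOf g - 1) = 1 := by
            rw [← pow_succ', Nat.sub_add_cancel (Nat.one_le_iff_ne_zero.mpr hord)]
            exact pow_orderOf_eq_one g
          have : g⁻¹ = g ^ (orderOf g - 1) := inv_eq_of_mul_eq_one_right h1
          show ι g⁻¹ ∈ A
          rw [this]
          exact hmono g hg _ }
    have hNnormal : N.Normal := by
      constructor
      intro h hh g
      have := hconj g (ι h) hh
      have heq : (g.toLinearMap : Module.End K L) * ι h * (g.symm.toLinearMap) =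
          ι (g * h * g⁻¹) := by
        rw [ι_mul, ι_mul]; rfl
      show ι (g * h * g⁻¹) ∈ A
      rwa [heq] at this
    refine ⟨N, hNnormal, ?_⟩
    ext e
    simp only [SetLike.mem_coe]
    constructor
    · intro he
      have hspan : e ∈ Submodule.span L (Set.range (ι (K := K) (L := L))) :=
        adjoin_le_span (hA2 he)
      obtain ⟨c, hc⟩ := (Submodule.mem_span_range_iff_exists_fun L).mp hspan
      have he' : (∑ g : L ≃ₐ[K] L, c g • ι g) ∈ A := by rwa [hc]
      rw [hιimg, ← hc]
      refine Submodule.sum_mem _ fun g _ => ?_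
      by_cases hcg : c g = 0
      · simp [hcg]
      · refine Submodule.smul_mem _ _ (Submodule.subset_span ⟨g, ?_, rfl⟩)
        exact extract A hL Finset.univ c he' g (Finset.mem_univ g) hcg
    · intro he
      rw [hιimg] at he
      induction he using Submodule.span_induction with
      | mem x hx => obtain ⟨h, hh, rfl⟩ := hx; exact hh
      | zero => exact A.zero_mem
      | add x y _ _ hx hy => exact A.add_mem hx hy
      | smul c x _ hx => exact lm_smul (K := K) c x ▸ A.mul_mem (hL c) hx
  · rintro ⟨N, hN, hspan⟩ g a ha
    rw [hιimg] at hspan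
    have hmem : ∀ x : Module.End K L,
        x ∈ A ↔ x ∈ Submodule.span L (ι (K := K) '' (N : Set (L ≃ₐ[K] L))) := fun x => by
      rw [← SetLike.mem_coe, hspan, SetLike.mem_coe]
    rw [hmem] at ha ⊢
    show ι g * a * ι g.symm ∈ _
    induction ha using Submodule.span_induction with
    | mem x hx =>
      obtain ⟨h, hh, rfl⟩ := hx
      have heq : ι g * ι h * ι g.symm = ι (g * h * g⁻¹) := by rw [ι_mul, ι_mul]; rfl
      rw [heq]
      exact Submodule.subset_span ⟨g * h * g⁻¹, hN.conj_mem h hh g, rfl⟩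
    | zero => simpa using Submodule.zero_mem _
    | add x y _ _ hx hy => rw [mul_add, add_mul]; exact Submodule.add_mem _ hx hy
    | smul c x _ hx =>
      rw [ι_mul_smul, smul_mul]
      exact Submodule.smul_mem _ _ hx
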